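/- Let f : [a,b] → ℝ be continuous and piecewise quadratic such that at every point the left derivative is greater than or equal to the right derivative. If t ∈ (a,b) is a local minimum of f, then f is differentiable at t and f'(t) = 0. -/

import Mathlib

open Set

lemma aux_deriv_right_nonneg {f : ℝ → ℝ} {x d : ℝ} (hmin : IsLocalMin f x)
    (h : HasDerivWithinAt f d (Set.Ici x) x) : 0 ≤ d := by
  have h1 : (1:ℝ) ∈ posTangentConeAt (Set.Ici x) x := by
    apply mem_posTangentConeAt_of_segment_subset
    rw [segment_eq_Icc (by linarith : x ≤ x + 1)]
    exact Set.Icc_subset_Ici_self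
  have := (hmin.on (Set.Ici x)).hasFDerivWithinAt_nonneg h.hasFDerivWithinAt h1
  simpa using this

lemma aux_deriv_left_nonpos {f : ℝ → ℝ} {x d : ℝ} (hmin : IsLocalMin f x)
    (h : HasDerivWithinAt f d (Set.Iic x) x) : d ≤ 0 := by
  have h1 : (-1:ℝ) ∈ posTangentConeAt (Set.Iic x) x := by
    apply mem_posTangentConeAt_of_segment_subset
    rw [segment_symm, segment_eq_Icc (by linarith : x + -1 ≤ x)]
    exact Set.Icc_subset_Iic_self
  have h2 := (hmin.on (Set.Iic x)).hasFDerivWithinAt_nonneg h.hasFDerivWithinAt h1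
  simp only [ContinuousLinearMap.toSpanSingleton_apply,
    smul_eq_mul] at h2
  linarith

lemma aux_quad_deriv (A B C x : ℝ) :
    HasDerivAt (fun y => A * y ^ 2 + B * y + C) (2 * A * x + B) x := by
  have h1 : HasDerivAt (fun y : ℝ => A * y ^ 2) (A * (2 * x)) x := by
    simpa using (hasDerivAt_pow 2 x).const_mul A
  have h2 : HasDerivAt (fun y : ℝ => B * y) B x := by
    simpa using (hasDerivAt_id x).const_mul B
  have h := (h1.add h2).add_const C
  exact h.congr_deriv (by ring)

theorem local_min_has_deriv_zero
    (a b : ℝ) (f : ℝ → ℝ) (n : ℕ)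
    (t : Fin (n + 1) → ℝ) (A B C : Fin n → ℝ)
    (ht : Monotone t) (ht0 : t 0 = a) (htn : t (Fin.last n) = b)
    (hpieces : ∀ i : Fin n, ∀ x ∈ Set.Icc (t i.castSucc) (t i.succ),
      f x = A i * x ^ 2 + B i * x + C i)
    (hcont : ContinuousOn f (Set.Icc a b))
    (hderiv : ∀ x ∈ Set.Ioo a b, ∀ dl dr : ℝ,
      HasDerivWithinAt f dl (Set.Iio x) x →
      HasDerivWithinAt f dr (Set.Ioi x) x → dr ≤ dl)
    (x : ℝ) (hx : x ∈ Set.Ioo a b) (hmin : IsLocalMin f x) :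
    HasDerivAt f 0 x := by
  obtain ⟨hax, hxb⟩ := hx
  have hn : 0 < n := by
    rcases Nat.eq_zero_or_pos n with h | h
    · subst h
      have : a = b := by rw [← ht0, ← htn]; rfl
      linarith
    · exact h
  -- right piece
  have hright : ∃ i : Fin n, t i.castSucc ≤ x ∧ x < t i.succ := by
    classical
    set S : Finset (Fin n) := Finset.univ.filter (fun i => t i.castSucc ≤ x) with hS
    have hS0 : (⟨0, hn⟩ : Fin n) ∈ S := by
      simp only [hS, Finset.mem_filter, Finset.mem_univ, true_and]
      have : (⟨0, hn⟩ : Fin n).castSucc = (0 : Fin (n+1)) := rfl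
      rw [this, ht0]; linarith
    have hSne : S.Nonempty := ⟨_, hS0⟩
    refine ⟨S.max' hSne, ?_, ?_⟩
    · have := S.max'_mem hSne
      simpa [hS] using this
    · by_contra hle
      push_neg at hle
      set i := S.max' hSne with hi
      have hlast : i.succ ≠ Fin.last n := by
        intro h
        rw [h, htn] at hle
        linarith
      have hlt : (i : ℕ) + 1 < n := by
        have := i.succ.isLt
        rcases lt_or_eq_of_le (Nat.lt_succ_iff.mp this) with h | h
        · exact h
        · exact absurd (Fin.ext (by simpa using h)) hlast
      have hjS : (⟨(i : ℕ) + 1, hlt⟩ : Fin n) ∈ S := by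
        simp only [hS, Finset.mem_filter, Finset.mem_univ, true_and]
        have : (⟨(i : ℕ) + 1, hlt⟩ : Fin n).castSucc = i.succ := rfl
        rw [this]; exact hle
      have := S.le_max' _ hjS
      simp only [Fin.le_def] at this
      omega
  -- left piece
  have hleft : ∃ i : Fin n, t i.castSucc < x ∧ x ≤ t i.succ := by
    classical
    set S : Finset (Fin n) := Finset.univ.filter (fun i => x ≤ t i.succ) with hS
    have hS0 : (⟨n - 1, by omega⟩ : Fin n) ∈ S := by
      simp only [hS, Finset.mem_filter, Finset.mem_univ, true_and]
      have : (⟨n - 1, by omega⟩ : Fin n).succ = Fin.last n := by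
        apply Fin.ext; simp; omega
      rw [this, htn]; linarith
    have hSne : S.Nonempty := ⟨_, hS0⟩
    refine ⟨S.min' hSne, ?_, ?_⟩
    · by_contra hle
      push_neg at hle
      set i := S.min' hSne with hi
      have h0 : (0 : ℕ) < (i : ℕ) := by
        rcases Nat.eq_zero_or_pos (i : ℕ) with h | h
        · exfalso
          have : i.castSucc = (0 : Fin (n+1)) := Fin.ext (by simpa using h)
          rw [this, ht0] at hle
          linarith
        · exact h
      have hjS : (⟨(i : ℕ) - 1, by omega⟩ : Fin n) ∈ S := by
        simp only [hS, Finset.mem_filter, Finset.mem_univ, true_and]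
        have : (⟨(i : ℕ) - 1, by omega⟩ : Fin n).succ = i.castSucc := by
          apply Fin.ext; simp; omega
        rw [this]; exact hle
      have := S.min'_le _ hjS
      simp only [Fin.le_def] at this
      omega
    · have := S.min'_mem hSne
      simpa [hS] using this
  obtain ⟨ir, hir1, hir2⟩ := hright
  obtain ⟨il, hil1, hil2⟩ := hleft
  -- one-sided derivatives
  set dr : ℝ := 2 * A ir * x + B ir with hdr
  set dl : ℝ := 2 * A il * x + B il with hdl
  have hR : HasDerivWithinAt f dr (Set.Ici x) x := by
    have hq := (aux_quad_deriv (A ir) (B ir) (C ir) x).hasDerivWithinAt (s := Set.Ici x)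
    apply hq.congr_of_eventuallyEq
    · filter_upwards [inter_mem_nhdsWithin (Set.Ici x) (Iio_mem_nhds hir2)] with y hy
      exact hpieces ir y ⟨le_trans hir1 hy.1, hy.2.le⟩
    · exact hpieces ir x ⟨hir1, hir2.le⟩
  have hL : HasDerivWithinAt f dl (Set.Iic x) x := by
    have hq := (aux_quad_deriv (A il) (B il) (C il) x).hasDerivWithinAt (s := Set.Iic x)
    apply hq.congr_of_eventuallyEq
    · filter_upwards [inter_mem_nhdsWithin (Set.Iic x) (Ioi_mem_nhds hil1)] with y hy
      exact hpieces il y ⟨hy.2.le, le_trans hy.1 hil2⟩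
    · exact hpieces il x ⟨hil1.le, hil2⟩
  have h1 : dr ≤ dl := hderiv x ⟨hax, hxb⟩ dl dr hL.Iio_of_Iic hR.Ioi_of_Ici
  have h2 : 0 ≤ dr := aux_deriv_right_nonneg hmin hR
  have h3 : dl ≤ 0 := aux_deriv_left_nonpos hmin hL
  have hdl0 : dl = 0 := le_antisymm h3 (le_trans h2 h1)
  have hdr0 : dr = 0 := le_antisymm (le_trans h1 h3) h2
  rw [hdl0] at hL
  rw [hdr0] at hR
  have := hL.union hR
  rw [Set.Iic_union_Ici] at this
  rw [← hasDerivWithinAt_univ]; exact this
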